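/- Let p, q ≥ 1 with (p,q) ≠ (1,1). Then the characteristic polynomial of the adjacency matrix of the Q-complemented graph of K_{p,q}, a graph on p+q+pq vertices, equals x·(x−1)^{pq−1}·(x+p)^{q−1}·(x+q)^{p−1}·(x² − (pq−p−q+1)x − (p+q)). -/

import Mathlib

open Matrix SimpleGraph
noncomputable def incMat {V : Type} [Fintype V] [DecidableEq V] {m : ℕ}
    (G : SimpleGraph V) [Fintype G.edgeSet] (e : Fin m ≃ G.edgeFinset) :
    Matrix V (Fin m) ℝ :=
  Matrix.of fun i j => if i ∈ (e j : Sym2 V) then (1 : ℝ) else 0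

instance (p q : ℕ) : DecidableRel (completeBipartiteGraph (Fin p) (Fin q)).Adj := by
  intro a b; unfold completeBipartiteGraph; dsimp; infer_instance

lemma edge_char (p q : ℕ) (s : Sym2 (Fin p ⊕ Fin q)) :
    s ∈ (completeBipartiteGraph (Fin p) (Fin q)).edgeFinset ↔
      ∃ a b, s = s(Sum.inl a, Sum.inr b) := by
  induction s using Sym2.ind with
  | _ u v =>
    simp only [mem_edgeFinset, mem_edgeSet, completeBipartiteGraph_adj]
    constructor
    · rintro (⟨h1, h2⟩ | ⟨h1, h2⟩)
      · obtain ⟨a, rfl⟩ := Sum.isLeft_iff.1 h1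
        obtain ⟨b, rfl⟩ := Sum.isRight_iff.1 h2
        exact ⟨a, b, rfl⟩
      · obtain ⟨a, rfl⟩ := Sum.isLeft_iff.1 h2
        obtain ⟨b, rfl⟩ := Sum.isRight_iff.1 h1
        exact ⟨a, b, Sym2.eq_swap⟩
    · rintro ⟨a, b, h⟩
      rw [Sym2.eq_iff] at h
      rcases h with ⟨rfl, rfl⟩ | ⟨rfl, rfl⟩ <;> simp

lemma sum_edge (p q : ℕ) (e : Fin (p * q) ≃ (completeBipartiteGraph (Fin p) (Fin q)).edgeFinset)
    (f : Sym2 (Fin p ⊕ Fin q) → ℝ) :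
    ∑ j : Fin (p * q), f (e j : Sym2 (Fin p ⊕ Fin q)) =
      ∑ ab : Fin p × Fin q, f s(Sum.inl ab.1, Sum.inr ab.2) := by
  rw [Fintype.sum_equiv e _ (fun s => f (s : Sym2 (Fin p ⊕ Fin q))) (fun _ => rfl)]
  rw [Finset.sum_coe_sort _ (fun s => f s)]
  have himg : (completeBipartiteGraph (Fin p) (Fin q)).edgeFinset =
      Finset.image (fun ab : Fin p × Fin q => s(Sum.inl ab.1, Sum.inr ab.2)) Finset.univ := by
    ext s
    simp only [Finset.mem_image, Finset.mem_univ, true_and, edge_char, Prod.exists]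
    tauto
  rw [himg, Finset.sum_image]
  rintro ⟨a, b⟩ - ⟨a', b'⟩ - h
  rw [Sym2.eq_iff] at h
  rcases h with ⟨h1, h2⟩ | ⟨h1, h2⟩
  · simp_all
  · exact absurd h1 (by simp)

section main
variable {p q : ℕ} (e : Fin (p * q) ≃ (completeBipartiteGraph (Fin p) (Fin q)).edgeFinset)

local notation "B" => incMat (completeBipartiteGraph (Fin p) (Fin q)) e

lemma colsum_left (j : Fin (p * q)) : ∑ a : Fin p, (B) (Sum.inl a) j = 1 := by
  obtain ⟨a, b, h⟩ := (edge_char p q _).1 (e j).2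
  simp only [incMat, of_apply, h, Sym2.mem_iff]
  have : ∀ a' : Fin p,
      (if (Sum.inl a' : Fin p ⊕ Fin q) = Sum.inl a ∨ (Sum.inl a' : Fin p ⊕ Fin q) = Sum.inr b
        then (1:ℝ) else 0) = if a' = a then 1 else 0 := by
    intro a'; simp
  simp only [this, Finset.sum_ite_eq' Finset.univ a (fun _ => (1:ℝ)), Finset.mem_univ, if_true]

lemma colsum_right (j : Fin (p * q)) : ∑ b : Fin q, (B) (Sum.inr b) j = 1 := by
  obtain ⟨a, b, h⟩ := (edge_char p q _).1 (e j).2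
  simp only [incMat, of_apply, h, Sym2.mem_iff]
  have : ∀ b' : Fin q,
      (if (Sum.inr b' : Fin p ⊕ Fin q) = Sum.inl a ∨ (Sum.inr b' : Fin p ⊕ Fin q) = Sum.inr b
        then (1:ℝ) else 0) = if b' = b then 1 else 0 := by
    intro b'; simp
  simp only [this, Finset.sum_ite_eq' Finset.univ b (fun _ => (1:ℝ)), Finset.mem_univ, if_true]



lemma BBt : (B) * (B)ᵀ = fromBlocks ((q:ℝ) • 1) (of fun _ _ => 1) (of fun _ _ => 1) ((p:ℝ) • 1) := by
  ext v w
  rw [mul_apply]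
  have hstep : ∀ v w : Fin p ⊕ Fin q,
      ∑ j, (B) v j * (B)ᵀ j w =
        ∑ ab : Fin p × Fin q,
          (if v ∈ s(Sum.inl ab.1, (Sum.inr ab.2 : Fin p ⊕ Fin q)) then (1:ℝ) else 0) *
          (if w ∈ s(Sum.inl ab.1, (Sum.inr ab.2 : Fin p ⊕ Fin q)) then (1:ℝ) else 0) := by
    intro v w
    exact sum_edge p q e (fun s => (if v ∈ s then (1:ℝ) else 0) * (if w ∈ s then (1:ℝ) else 0))
  rw [hstep]
  rcases v with a | b <;> rcases w with a' | b' <;>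
    simp only [Fintype.sum_prod_type, Sym2.mem_iff, fromBlocks_apply₁₁, fromBlocks_apply₁₂,
      fromBlocks_apply₂₁, fromBlocks_apply₂₂, Matrix.smul_apply, one_apply, of_apply, smul_eq_mul]
  · -- inl a, inl a'
    by_cases h : a = a' <;> simp [h, Finset.sum_ite_eq', mul_ite, Finset.filter_eq']
  · -- inl a, inr b'
    simp [Finset.sum_ite_eq', mul_ite, Finset.filter_eq']
  · simp [Finset.sum_ite_eq', mul_ite, Finset.filter_eq']
  · by_cases h : b = b' <;> simp [h, Finset.sum_comm (γ := Fin q), mul_ite, Finset.filter_eq']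


lemma Jm_eq : (of (fun _ _ => (1:ℝ)) : Matrix (Fin (p*q)) (Fin (p*q)) ℝ) =
    ((B)ᵀ : Matrix (Fin (p*q)) (Fin p ⊕ Fin q) ℝ) * (fromBlocks 0 (of fun _ _ => (1:ℝ)) 0 0 : Matrix (Fin p ⊕ Fin q) (Fin p ⊕ Fin q) ℝ) * (B) := by
  ext j k
  rw [mul_apply]
  simp only [mul_apply, transpose_apply]
  rw [Fintype.sum_sum_type]
  have h1 : ∀ a : Fin p,
      (∑ x : Fin p ⊕ Fin q, (B) x j *
        (fromBlocks (0 : Matrix (Fin p) (Fin p) ℝ) ((of fun _ _ => (1:ℝ)) : Matrix (Fin p) (Fin q) ℝ) (0 : Matrix (Fin q) (Fin p) ℝ) (0 : Matrix (Fin q) (Fin q) ℝ)) x (Sum.inl a)) = 0 := by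
    intro a
    rw [Fintype.sum_sum_type]
    simp
  have h2 : ∀ b : Fin q,
      (∑ x : Fin p ⊕ Fin q, (B) x j *
        (fromBlocks (0 : Matrix (Fin p) (Fin p) ℝ) ((of fun _ _ => (1:ℝ)) : Matrix (Fin p) (Fin q) ℝ) (0 : Matrix (Fin q) (Fin p) ℝ) (0 : Matrix (Fin q) (Fin q) ℝ)) x (Sum.inr b)) =
        ∑ a : Fin p, (B) (Sum.inl a) j := by
    intro b
    rw [Fintype.sum_sum_type]
    simp
  simp only [h1, h2, zero_mul, Finset.sum_const_zero, zero_add, colsum_left e j, one_mul,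
    colsum_right e k, of_apply]


-- J_{pq} * J_{qp} = q • J_p
lemma J_mul_J (p q r : ℕ) :
    ((of fun _ _ => (1:ℝ)) : Matrix (Fin p) (Fin q) ℝ) * ((of fun _ _ => (1:ℝ)) : Matrix (Fin q) (Fin r) ℝ)
      = (q:ℝ) • (of fun _ _ => (1:ℝ)) := by
  ext i j; simp [mul_apply]

lemma Cblocks (x : ℝ) :
    ((1-x⁻¹) • (1 : Matrix (Fin p ⊕ Fin q) (Fin p ⊕ Fin q) ℝ) -
        fromBlocks 0 (of fun _ _ => (1:ℝ)) 0 0)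
      = fromBlocks ((1-x⁻¹)•1) (-(of fun _ _ => (1:ℝ))) 0 ((1-x⁻¹)•1) := by
  rw [← fromBlocks_one, fromBlocks_smul, sub_eq_add_neg, fromBlocks_neg, fromBlocks_add]
  congr 1 <;> simp


lemma Tblocks (x : ℝ) :
    (1 : Matrix (Fin p ⊕ Fin q) (Fin p ⊕ Fin q) ℝ) +
      ((x-1)⁻¹ • ((1-x⁻¹) • (1 : Matrix (Fin p ⊕ Fin q) (Fin p ⊕ Fin q) ℝ) -
        fromBlocks 0 (of fun _ _ => (1:ℝ)) 0 0)) *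
      fromBlocks ((q:ℝ) • 1) (of fun _ _ => 1) (of fun _ _ => 1) ((p:ℝ) • 1)
      = fromBlocks
          ((1 + (x-1)⁻¹*(1-x⁻¹)*q) • 1 + (-((x-1)⁻¹*q)) • (of fun _ _ => (1:ℝ)))
          (((x-1)⁻¹*((1-x⁻¹)-p)) • (of fun _ _ => (1:ℝ)))
          (((x-1)⁻¹*(1-x⁻¹)) • (of fun _ _ => (1:ℝ)))
          ((1 + (x-1)⁻¹*(1-x⁻¹)*p) • 1) := by
  rw [Cblocks, fromBlocks_smul, fromBlocks_multiply, ← fromBlocks_one, fromBlocks_add]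
  ext i j
  rcases i with a | b <;> rcases j with a' | b' <;>
    simp only [fromBlocks_apply₁₁, fromBlocks_apply₁₂, fromBlocks_apply₂₁, fromBlocks_apply₂₂,
      Matrix.add_apply, Matrix.smul_apply, Matrix.mul_apply, one_apply, of_apply, Matrix.neg_apply, Matrix.zero_apply,
      Matrix.sub_apply, Matrix.smul_mul, Matrix.mul_smul, Matrix.zero_mul, smul_eq_mul, mul_ite, mul_one,
      mul_zero, ite_mul, zero_mul, one_mul, Finset.sum_const, Finset.card_univ, Fintype.card_fin,
      nsmul_eq_mul, zero_add, add_zero, Finset.sum_ite_eq, Finset.sum_ite_eq', Finset.mem_univ,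
      if_true, Pi.smul_apply, Pi.neg_apply, Pi.sub_apply] <;>
    first
      | (by_cases h : a = a' <;> simp [h] <;> ring)
      | (by_cases h : b = b' <;> simp [h] <;> ring)
      | ring


lemma det_smul_one_add_J (n : ℕ) (hn : 1 ≤ n) (γ ε : ℝ) (hγ : γ ≠ 0) :
    (γ • 1 + ε • (of fun _ _ => (1:ℝ)) : Matrix (Fin n) (Fin n) ℝ).det
      = γ^(n-1) * (γ + n*ε) := by
  have hJ : (ε/γ) • (of fun _ _ => (1:ℝ) : Matrix (Fin n) (Fin n) ℝ)
      = (of fun _ _ => ε/γ : Matrix (Fin n) (Fin 1) ℝ) * (of fun _ _ => (1:ℝ) : Matrix (Fin 1) (Fin n) ℝ) := by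
    ext i j; simp [mul_apply]
  have key : (γ • 1 + ε • (of fun _ _ => (1:ℝ)) : Matrix (Fin n) (Fin n) ℝ)
      = γ • (1 + (ε/γ) • (of fun _ _ => (1:ℝ))) := by
    rw [smul_add, smul_smul, mul_div_cancel₀ _ hγ]
  rw [key, det_smul, hJ, Matrix.det_one_add_mul_comm]
  have h2 : ((of fun _ _ => (1:ℝ) : Matrix (Fin 1) (Fin n) ℝ) *
      (of fun _ _ => ε/γ : Matrix (Fin n) (Fin 1) ℝ)) = of fun _ _ => n * (ε/γ) := by
    ext i j; simp [mul_apply, Finset.sum_const]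
  rw [h2]
  have hdet : (1 + (of fun _ _ => (n:ℝ) * (ε/γ)) : Matrix (Fin 1) (Fin 1) ℝ).det = 1 + n*(ε/γ) := by
    rw [Matrix.det_fin_one]; simp
  rw [hdet, Fintype.card_fin]
  have hn' : γ ^ n = γ ^ (n-1) * γ := by
    conv_lhs => rw [show n = (n-1)+1 by omega]
    ring
  rw [hn']
  field_simp

set_option maxHeartbeats 1000000 in
lemma det_generic (hp : 1 ≤ p) (hq : 1 ≤ q) (x : ℝ) (hx0 : x ≠ 0) (hx1 : x - 1 ≠ 0)
    (hxp : x + (p:ℝ) ≠ 0) (hxq : x + (q:ℝ) ≠ 0) :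
    (x • (1 : Matrix ((Fin p ⊕ Fin q) ⊕ Fin (p * q)) ((Fin p ⊕ Fin q) ⊕ Fin (p * q)) ℝ) -
        Matrix.fromBlocks 0 (B) (B)ᵀ
          (Matrix.of (fun _ _ => (1 : ℝ)) - 1 - ((B)ᵀ * (B) - (2 : ℝ) • 1))).det
      = x^(p+q) * ((x-1)^(p*q) *
      ((1 + (x-1)⁻¹*(1 - x⁻¹)*p)^q *
        ((1 + (x-1)⁻¹*(1 - x⁻¹)*q)^(p-1) *
          ((1 + (x-1)⁻¹*(1 - x⁻¹)*q) +
            p * (-((x-1)⁻¹*q) - (x-1)⁻¹*((1 - x⁻¹)-p)*(1 + (x-1)⁻¹*(1 - x⁻¹)*p)⁻¹*((x-1)⁻¹*(1 - x⁻¹))*q))))) := by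
  set D0 : Matrix (Fin (p*q)) (Fin (p*q)) ℝ :=
    Matrix.of (fun _ _ => (1 : ℝ)) - 1 - ((B)ᵀ * (B) - (2 : ℝ) • 1) with hD0
  have step1 : x • (1 : Matrix ((Fin p ⊕ Fin q) ⊕ Fin (p * q)) ((Fin p ⊕ Fin q) ⊕ Fin (p * q)) ℝ) -
      Matrix.fromBlocks 0 (B) (B)ᵀ D0
      = fromBlocks (x • 1) (-(B)) (-(B)ᵀ) (x • 1 - D0) := by
    rw [← fromBlocks_one, fromBlocks_smul, sub_eq_add_neg, fromBlocks_neg, fromBlocks_add]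
    congr 1 <;> simp [sub_eq_add_neg]
  rw [step1]
  letI : Invertible (x • (1 : Matrix (Fin p ⊕ Fin q) (Fin p ⊕ Fin q) ℝ)) :=
    ⟨x⁻¹ • 1, by
      rw [Matrix.smul_mul, Matrix.mul_smul, Matrix.one_mul, smul_smul, inv_mul_cancel₀ hx0,
        one_smul],
      by
      rw [Matrix.smul_mul, Matrix.mul_smul, Matrix.one_mul, smul_smul, mul_inv_cancel₀ hx0,
        one_smul]⟩
  rw [Matrix.det_fromBlocks₁₁]
  have hInv : ⅟(x • (1 : Matrix (Fin p ⊕ Fin q) (Fin p ⊕ Fin q) ℝ)) = x⁻¹ • 1 := rfl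
  have hdetA : (x • (1 : Matrix (Fin p ⊕ Fin q) (Fin p ⊕ Fin q) ℝ)).det = x^(p+q) := by
    rw [det_smul, det_one, mul_one, Fintype.card_sum, Fintype.card_fin, Fintype.card_fin]
  rw [hdetA, hInv]
  -- Schur complement simplification
  set C' : Matrix (Fin p ⊕ Fin q) (Fin p ⊕ Fin q) ℝ :=
    (1-x⁻¹) • 1 - fromBlocks 0 (of fun _ _ => (1:ℝ)) 0 0 with hC'
  have hS : x • (1 : Matrix (Fin (p*q)) (Fin (p*q)) ℝ) - D0 -
      (-(B)ᵀ) * (x⁻¹ • (1 : Matrix (Fin p ⊕ Fin q) (Fin p ⊕ Fin q) ℝ)) * (-(B))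
      = (x-1) • 1 + (B)ᵀ * C' * (B) := by
    have h3 : (-(B)ᵀ) * (x⁻¹ • (1 : Matrix (Fin p ⊕ Fin q) (Fin p ⊕ Fin q) ℝ)) * (-(B))
        = x⁻¹ • ((B)ᵀ * (B)) := by
      rw [Matrix.neg_mul, Matrix.mul_neg, Matrix.neg_mul, neg_neg, Matrix.mul_smul,
        Matrix.mul_one, Matrix.smul_mul]
    have h4 : (B)ᵀ * C' * (B) = (1-x⁻¹) • ((B)ᵀ * (B)) - (of fun _ _ => (1:ℝ)) := by
      rw [hC', Matrix.mul_sub, Matrix.sub_mul, Matrix.mul_smul, Matrix.mul_one, Matrix.smul_mul,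
        Jm_eq e]
    rw [h3, h4, hD0]
    have h2s : ((2:ℝ) • (1 : Matrix (Fin (p*q)) (Fin (p*q)) ℝ)) = 1 + 1 := by
      rw [two_smul]
    rw [h2s]
    have hxs : (x-1) • (1 : Matrix (Fin (p*q)) (Fin (p*q)) ℝ) = x • 1 - 1 := by
      rw [sub_smul, one_smul]
    have hxs2 : (1-x⁻¹) • ((B)ᵀ * (B)) = (B)ᵀ * (B) - x⁻¹ • ((B)ᵀ * (B)) := by
      rw [sub_smul, one_smul]
    rw [hxs, hxs2]
    abel
  rw [hS]
  have hfact : (x-1) • (1 + (B)ᵀ * (((x-1)⁻¹ • C') * (B)))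
      = (x-1) • (1 : Matrix (Fin (p*q)) (Fin (p*q)) ℝ) + (B)ᵀ * C' * (B) := by
    rw [smul_add]
    congr 1
    rw [Matrix.smul_mul]
    rw [Matrix.mul_smul, smul_smul, mul_inv_cancel₀ hx1, one_smul, ← Matrix.mul_assoc]
  rw [← hfact, det_smul, Fintype.card_fin, Matrix.det_one_add_mul_comm, Matrix.mul_assoc,
    BBt e, hC', Tblocks]
  set δ : ℝ := 1 + (x-1)⁻¹*(1-x⁻¹)*p with hδdef
  have hδx : δ = (x+p)/x := by rw [hδdef]; field_simp
  have hδ0 : δ ≠ 0 := by rw [hδx]; exact div_ne_zero hxp hx0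
  set γ : ℝ := 1 + (x-1)⁻¹*(1-x⁻¹)*q with hγdef
  have hγx : γ = (x+q)/x := by rw [hγdef]; field_simp
  have hγ0 : γ ≠ 0 := by rw [hγx]; exact div_ne_zero hxq hx0
  letI : Invertible (δ • (1 : Matrix (Fin q) (Fin q) ℝ)) :=
    ⟨δ⁻¹ • 1, by
      rw [Matrix.smul_mul, Matrix.mul_smul, Matrix.one_mul, smul_smul, inv_mul_cancel₀ hδ0,
        one_smul],
      by
      rw [Matrix.smul_mul, Matrix.mul_smul, Matrix.one_mul, smul_smul, mul_inv_cancel₀ hδ0,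
        one_smul]⟩
  rw [Matrix.det_fromBlocks₂₂]
  have hInv2 : ⅟(δ • (1 : Matrix (Fin q) (Fin q) ℝ)) = δ⁻¹ • 1 := rfl
  have hdetD : (δ • (1 : Matrix (Fin q) (Fin q) ℝ)).det = δ^q := by
    rw [det_smul, det_one, mul_one, Fintype.card_fin]
  rw [hInv2, hdetD]
  set ε : ℝ := -((x-1)⁻¹*q) - (x-1)⁻¹*((1 - x⁻¹)-p)*δ⁻¹*((x-1)⁻¹*(1 - x⁻¹))*q with hεdef
  have hSchur2 : (γ • 1 + (-((x-1)⁻¹*(q:ℝ))) • (of fun _ _ => (1:ℝ)) : Matrix (Fin p) (Fin p) ℝ)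
      - (((x-1)⁻¹*((1 - x⁻¹)-(p:ℝ))) • (of fun _ _ => (1:ℝ)) : Matrix (Fin p) (Fin q) ℝ) *
        (δ⁻¹ • (1 : Matrix (Fin q) (Fin q) ℝ)) * (((x-1)⁻¹*(1 - x⁻¹)) • (of fun _ _ => (1:ℝ)) : Matrix (Fin q) (Fin p) ℝ)
      = γ • 1 + ε • (of fun _ _ => (1:ℝ)) := by
    ext i j
    simp only [Matrix.sub_apply, Matrix.add_apply, Matrix.smul_apply, one_apply, of_apply, mul_apply, smul_eq_mul,
      mul_ite, mul_one, mul_zero, ite_mul, zero_mul, one_mul, Finset.sum_const,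
      Finset.card_univ, Fintype.card_fin, nsmul_eq_mul, Finset.sum_ite_eq, Finset.sum_ite_eq',
      Finset.mem_univ, if_true, hεdef]
    by_cases h : i = j <;> simp [h, Finset.sum_const, mul_comm] <;> ring
  rw [hSchur2, det_smul_one_add_J p hp γ ε hγ0, hεdef]

end main

lemma scalar_id (p q : ℕ) (hp : 1 ≤ p) (hq : 1 ≤ q) (x : ℝ) (hx0 : x ≠ 0)
    (hx1 : x - 1 ≠ 0) (hxp : x + (p:ℝ) ≠ 0) (hxq : x + (q:ℝ) ≠ 0) :
    x^(p+q) * ((x-1)^(p*q) *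
      ((1 + (x-1)⁻¹*(1 - x⁻¹)*p)^q *
        ((1 + (x-1)⁻¹*(1 - x⁻¹)*q)^(p-1) *
          ((1 + (x-1)⁻¹*(1 - x⁻¹)*q) +
            p * (-((x-1)⁻¹*q) - (x-1)⁻¹*((1 - x⁻¹)-p)*(1 + (x-1)⁻¹*(1 - x⁻¹)*p)⁻¹*((x-1)⁻¹*(1 - x⁻¹))*q)))))
      = x * (x - 1) ^ (p * q - 1) * (x + (p : ℝ)) ^ (q - 1) * (x + (q : ℝ)) ^ (p - 1) *
          (x ^ 2 - ((p : ℝ) * (q : ℝ) - (p : ℝ) - (q : ℝ) + 1) * x -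
            ((p : ℝ) + (q : ℝ))) := by
  have hδ : (1 + (x-1)⁻¹*(1 - x⁻¹)*(p:ℝ)) = (x+p)/x := by field_simp
  have hγ : (1 + (x-1)⁻¹*(1 - x⁻¹)*(q:ℝ)) = (x+q)/x := by field_simp
  have hε : (-((x-1)⁻¹*(q:ℝ)) - (x-1)⁻¹*((1 - x⁻¹)-(p:ℝ))*(1 + (x-1)⁻¹*(1 - x⁻¹)*(p:ℝ))⁻¹*((x-1)⁻¹*(1 - x⁻¹))*(q:ℝ))
      = -(q:ℝ)*(x^2+x-1)/(x*(x-1)*(x+p)) := by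
    rw [hδ]
    field_simp
    ring
  rw [hε, hδ, hγ]
  have hlast : ((x+q)/x + (p:ℝ) * (-(q:ℝ)*(x^2+x-1)/(x*(x-1)*(x+p))))
      = (x ^ 2 - ((p : ℝ) * (q : ℝ) - (p : ℝ) - (q : ℝ) + 1) * x - ((p : ℝ) + (q : ℝ))) / ((x-1)*(x+p)) := by
    field_simp
    ring
  rw [hlast]
  rw [div_pow, div_pow]
  have hpq1 : 1 ≤ p * q := Nat.one_le_iff_ne_zero.2 (Nat.mul_ne_zero (by omega) (by omega))
  have e1 : x ^ (p+q) = x^(p-1) * x^(q) * x := by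
    rw [show p + q = (p-1) + q + 1 by omega, pow_succ, pow_add]
  have e2 : (x-1)^(p*q) = (x-1)^(p*q-1) * (x-1) := by
    rw [← pow_succ, Nat.sub_add_cancel hpq1]
  have e3 : (x+(p:ℝ))^q = (x+(p:ℝ))^(q-1) * (x+p) := by
    rw [← pow_succ, Nat.sub_add_cancel hq]
  rw [e1, e2, e3]
  have hxp1 : x^(p-1) ≠ 0 := pow_ne_zero _ hx0
  have hxq1 : x^(q:ℕ) ≠ 0 := pow_ne_zero _ hx0
  field_simp


theorem stmt_15 (p q : ℕ) (hp : 1 ≤ p) (hq : 1 ≤ q) (hpq : ¬(p = 1 ∧ q = 1))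
    (e : Fin (p * q) ≃ (completeBipartiteGraph (Fin p) (Fin q)).edgeFinset)
    (x : ℝ) :
    (x • (1 : Matrix ((Fin p ⊕ Fin q) ⊕ Fin (p * q)) ((Fin p ⊕ Fin q) ⊕ Fin (p * q)) ℝ) -
        Matrix.fromBlocks 0 (incMat (completeBipartiteGraph (Fin p) (Fin q)) e)
          (incMat (completeBipartiteGraph (Fin p) (Fin q)) e)ᵀ
          (Matrix.of (fun _ _ => (1 : ℝ)) - 1 -
            ((incMat (completeBipartiteGraph (Fin p) (Fin q)) e)ᵀ *
              incMat (completeBipartiteGraph (Fin p) (Fin q)) e - (2 : ℝ) • 1))).det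
      = x * (x - 1) ^ (p * q - 1) * (x + (p : ℝ)) ^ (q - 1) * (x + (q : ℝ)) ^ (p - 1) *
          (x ^ 2 - ((p : ℝ) * (q : ℝ) - (p : ℝ) - (q : ℝ) + 1) * x -
            ((p : ℝ) + (q : ℝ))) := by
  set M : Matrix ((Fin p ⊕ Fin q) ⊕ Fin (p * q)) ((Fin p ⊕ Fin q) ⊕ Fin (p * q)) ℝ :=
    Matrix.fromBlocks 0 (incMat (completeBipartiteGraph (Fin p) (Fin q)) e)
          (incMat (completeBipartiteGraph (Fin p) (Fin q)) e)ᵀ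
          (Matrix.of (fun _ _ => (1 : ℝ)) - 1 -
            ((incMat (completeBipartiteGraph (Fin p) (Fin q)) e)ᵀ *
              incMat (completeBipartiteGraph (Fin p) (Fin q)) e - (2 : ℝ) • 1)) with hM
  set F : ℝ → ℝ := fun y => (y • (1 : Matrix ((Fin p ⊕ Fin q) ⊕ Fin (p * q))
      ((Fin p ⊕ Fin q) ⊕ Fin (p * q)) ℝ) - M).det with hF
  set G : ℝ → ℝ := fun y =>
      y * (y - 1) ^ (p * q - 1) * (y + (p : ℝ)) ^ (q - 1) * (y + (q : ℝ)) ^ (p - 1) *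
        (y ^ 2 - ((p : ℝ) * (q : ℝ) - (p : ℝ) - (q : ℝ) + 1) * y - ((p : ℝ) + (q : ℝ))) with hG
  have hFc : Continuous F := by
    apply Continuous.matrix_det
    exact (continuous_id.smul continuous_const).sub continuous_const
  have hGc : Continuous G := by
    rw [hG]; fun_prop
  have hEq : Set.EqOn F G ({0, 1, -(p:ℝ), -(q:ℝ)} : Set ℝ)ᶜ := by
    intro y hy
    simp only [Set.mem_compl_iff, Set.mem_insert_iff, Set.mem_singleton_iff, not_or] at hy
    obtain ⟨hy0, hy1, hyp, hyq⟩ := hy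
    have h1 : y - 1 ≠ 0 := sub_ne_zero.2 hy1
    have h2 : y + (p:ℝ) ≠ 0 := by
      intro h; exact hyp (by linarith)
    have h3 : y + (q:ℝ) ≠ 0 := by
      intro h; exact hyq (by linarith)
    have := det_generic e hp hq y hy0 h1 h2 h3
    rw [hF, hM]
    simp only []
    rw [this, hG]
    exact scalar_id p q hp hq y hy0 h1 h2 h3
  have hdense : Dense (({0, 1, -(p:ℝ), -(q:ℝ)} : Set ℝ)ᶜ) :=
    Set.Countable.dense_compl ℝ (Set.toFinite _).countable
  have := Continuous.ext_on hdense hFc hGc hEq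
  exact congrFun this x
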